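/- The difference Ω₁(b) − I(b) tends to 0 as b → ∞, where Ω₁(b) = ∫_1^∞ (√u/√(u−1))·√(u+b)/(u²+b) du and I(b) = ∫_1^∞ √(u+b)/(u²+b) du; moreover I(b) → π/2 as b → ∞. Consequently Ω₁(b) → π/2 as b → ∞. -/

import Mathlib

open Real MeasureTheory Set Filter

lemma fb_le_bound {b u : ℝ} (hb : 0 ≤ b) (hu : 1 ≤ u) :
    Real.sqrt (u+b)/(u^2+b) ≤ Real.sqrt (1+b) * (Real.sqrt u / u^2) := by
  have hu0 : (0:ℝ) < u := lt_of_lt_of_le one_pos hu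
  have h1 : Real.sqrt (u+b) ≤ Real.sqrt u * Real.sqrt (1+b) := by
    rw [← Real.sqrt_mul hu0.le]
    apply Real.sqrt_le_sqrt; nlinarith
  calc Real.sqrt (u+b)/(u^2+b) ≤ (Real.sqrt u * Real.sqrt (1+b))/(u^2) := by
        apply div_le_div₀ (by positivity) h1 (by positivity) (by nlinarith)
    _ = Real.sqrt (1+b) * (Real.sqrt u / u^2) := by ring

lemma sqrtsq_le {b u : ℝ} (hb : 0 ≤ b) (hu0 : 0 < u) : u ≤ Real.sqrt (u^2+b) :=
  calc u = Real.sqrt (u^2) := (Real.sqrt_sq hu0.le).symm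
    _ ≤ _ := Real.sqrt_le_sqrt (by linarith)

lemma fb_le_invu {b u : ℝ} (hb : 0 ≤ b) (hu : 1 ≤ u) :
    Real.sqrt (u+b)/(u^2+b) ≤ u⁻¹ := by
  have hu0 : (0:ℝ) < u := lt_of_lt_of_le one_pos hu
  have hden : (0:ℝ) < u^2 + b := by positivity
  have h1 : Real.sqrt (u+b) ≤ Real.sqrt (u^2+b) := Real.sqrt_le_sqrt (by nlinarith)
  have h2 : u ≤ Real.sqrt (u^2+b) := sqrtsq_le hb hu0
  have h3 : Real.sqrt (u^2+b) * Real.sqrt (u^2+b) = u^2 + b :=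
    Real.mul_self_sqrt hden.le
  rw [div_le_iff₀ hden, inv_mul_eq_div, le_div_iff₀ hu0]
  nlinarith [Real.sqrt_nonneg (u^2+b)]

lemma h_nonneg {u : ℝ} (hu : 1 < u) : 0 ≤ Real.sqrt u / Real.sqrt (u-1) - 1 := by
  have h0 : (0:ℝ) < u - 1 := by linarith
  have hs : (0:ℝ) < Real.sqrt (u-1) := Real.sqrt_pos.2 h0
  have : Real.sqrt (u-1) ≤ Real.sqrt u := Real.sqrt_le_sqrt (by linarith)
  rw [sub_nonneg, le_div_iff₀ hs, one_mul]; exact this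

lemma h_le {u : ℝ} (hu : 1 < u) :
    Real.sqrt u / Real.sqrt (u-1) - 1 ≤ (Real.sqrt (u-1))⁻¹ := by
  have h0 : (0:ℝ) < u - 1 := by linarith
  have hs : (0:ℝ) < Real.sqrt (u-1) := Real.sqrt_pos.2 h0
  have key : Real.sqrt u ≤ Real.sqrt (u-1) + 1 := by
    rw [show Real.sqrt (u-1) + 1 = Real.sqrt ((Real.sqrt (u-1) + 1)^2) by
      rw [Real.sqrt_sq (by positivity)]]
    apply Real.sqrt_le_sqrt
    nlinarith [Real.sq_sqrt h0.le, Real.sqrt_nonneg (u-1)]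
  rw [sub_le_iff_le_add, div_le_iff₀ hs]
  have heq : ((Real.sqrt (u-1))⁻¹ + 1) * Real.sqrt (u-1) = 1 + Real.sqrt (u-1) := by
    field_simp
  linarith [key, heq]

lemma base_int : IntegrableOn (fun u : ℝ => Real.sqrt u / u ^ 2) (Ioi 1) := by
  apply (integrableOn_Ioi_rpow_of_lt (show (-3/2 : ℝ) < -1 by norm_num) one_pos).congr_fun
    ?_ measurableSet_Ioi
  intro u hu
  have hu0 : (0:ℝ) < u := lt_trans one_pos hu
  show u ^ (-3/2 : ℝ) = Real.sqrt u / u ^ 2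
  rw [show (-3/2 : ℝ) = 1/2 - 2 by norm_num, Real.rpow_sub hu0, ← Real.sqrt_eq_rpow,
    show (2:ℝ) = ((2:ℕ):ℝ) by norm_num, Real.rpow_natCast]

lemma shift_int : IntegrableOn (fun u : ℝ => ((u - 1) ^ (-(1/2) : ℝ))) (Ioc 1 2) := by
  have h : IntervalIntegrable (fun x : ℝ => x ^ (-(1/2) : ℝ)) volume 0 1 :=
    intervalIntegral.intervalIntegrable_rpow' (by norm_num)
  have h2 := h.comp_sub_right 1
  rw [intervalIntegrable_iff_integrableOn_Ioc_of_le (by norm_num)] at h2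
  norm_num at h2
  exact h2

lemma g_int : IntegrableOn (fun u : ℝ => (Real.sqrt (u-1))⁻¹ * u⁻¹) (Ioi 1) := by
  have hmeas : Measurable (fun u : ℝ => (Real.sqrt (u-1))⁻¹ * u⁻¹) := by fun_prop
  have h1 : IntegrableOn (fun u : ℝ => (Real.sqrt (u-1))⁻¹ * u⁻¹) (Ioc 1 2) := by
    apply shift_int.mono' hmeas.aestronglyMeasurable
    rw [ae_restrict_iff' measurableSet_Ioc]
    refine ae_of_all _ fun u hu => ?_
    have h0 : (0:ℝ) < u - 1 := by linarith [hu.1]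
    have hu0 : (0:ℝ) < u := by linarith [hu.1]
    have hs : (0:ℝ) < Real.sqrt (u-1) := Real.sqrt_pos.2 h0
    rw [Real.norm_eq_abs, abs_of_nonneg (by positivity),
      Real.rpow_neg h0.le, ← Real.sqrt_eq_rpow]
    calc (Real.sqrt (u-1))⁻¹ * u⁻¹ ≤ (Real.sqrt (u-1))⁻¹ * 1 := by
          apply mul_le_mul_of_nonneg_left _ (by positivity)
          rw [inv_le_one_iff₀]; right; linarith [hu.1]
      _ = (Real.sqrt (u-1))⁻¹ := mul_one _
  have h2 : IntegrableOn (fun u : ℝ => (Real.sqrt (u-1))⁻¹ * u⁻¹) (Ioi 2) := by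
    have hb : IntegrableOn (fun u : ℝ => Real.sqrt 2 * (Real.sqrt u / u ^ 2)) (Ioi 2) :=
      ((base_int.mono_set (Ioi_subset_Ioi (by norm_num))).const_mul _)
    apply hb.mono' hmeas.aestronglyMeasurable
    rw [ae_restrict_iff' measurableSet_Ioi]
    refine ae_of_all _ fun u hu => ?_
    have hu2 : (2:ℝ) < u := hu
    have hu0 : (0:ℝ) < u := by linarith
    have h0 : (0:ℝ) < u - 1 := by linarith
    rw [Real.norm_eq_abs, abs_of_nonneg (by positivity)]
    have h3 : Real.sqrt u ≤ Real.sqrt 2 * Real.sqrt (u - 1) := by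
      rw [← Real.sqrt_mul (by norm_num : (0:ℝ) ≤ 2)]
      exact Real.sqrt_le_sqrt (by linarith)
    have lhs_eq : (Real.sqrt (u-1))⁻¹ * u⁻¹ = 1/(Real.sqrt (u-1)*u) := by
      rw [one_div, mul_inv]
    have rhs_eq : Real.sqrt 2 * (Real.sqrt u / u^2) = (Real.sqrt 2 * Real.sqrt u)/u^2 := by
      ring
    rw [lhs_eq, rhs_eq, div_le_div_iff₀ (by positivity) (by positivity)]
    have h4 := mul_le_mul_of_nonneg_right h3 (mul_nonneg (Real.sqrt_nonneg u) hu0.le)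
    have h5 : Real.sqrt u * Real.sqrt u = u := Real.mul_self_sqrt hu0.le
    nlinarith [Real.sqrt_nonneg (u-1), Real.sqrt_nonneg u, Real.sqrt_nonneg 2]
  have h3 := h1.union h2
  rwa [Ioc_union_Ioi_eq_Ioi (by norm_num : (1:ℝ) ≤ 2)] at h3

lemma fb_int {b : ℝ} (hb : 0 ≤ b) :
    IntegrableOn (fun u : ℝ => Real.sqrt (u+b)/(u^2+b)) (Ioi 1) := by
  apply (base_int.const_mul (Real.sqrt (1+b))).mono'
    (by fun_prop : Measurable fun u : ℝ => Real.sqrt (u+b)/(u^2+b)).aestronglyMeasurable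
  rw [ae_restrict_iff' measurableSet_Ioi]
  refine ae_of_all _ fun u hu => ?_
  have hu1 : (1:ℝ) < u := hu
  have hden : (0:ℝ) < u^2 + b := by positivity
  rw [Real.norm_eq_abs, abs_of_nonneg (by positivity)]
  exact fb_le_bound hb hu1.le

lemma hf_int {b : ℝ} (hb : 0 ≤ b) :
    IntegrableOn (fun u : ℝ =>
      (Real.sqrt u / Real.sqrt (u-1) - 1) * (Real.sqrt (u+b)/(u^2+b))) (Ioi 1) := by
  apply g_int.mono' (by fun_prop :
      Measurable fun u : ℝ =>
        (Real.sqrt u / Real.sqrt (u-1) - 1) * (Real.sqrt (u+b)/(u^2+b))).aestronglyMeasurable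
  rw [ae_restrict_iff' measurableSet_Ioi]
  refine ae_of_all _ fun u hu => ?_
  have hu1 : (1:ℝ) < u := hu
  have hu0 : (0:ℝ) < u := by linarith
  have hden : (0:ℝ) < u^2 + b := by positivity
  rw [Real.norm_eq_abs, abs_of_nonneg (mul_nonneg (h_nonneg hu1) (by positivity))]
  exact mul_le_mul (h_le hu1) (fb_le_invu hb hu1.le) (by positivity)
    (by positivity)

lemma F1_int {b : ℝ} (hb : 0 ≤ b) :
    IntegrableOn (fun u : ℝ =>
      (Real.sqrt u / Real.sqrt (u-1)) * (Real.sqrt (u+b)/(u^2+b))) (Ioi 1) := by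
  apply IntegrableOn.congr_fun ((hf_int hb).add (fb_int hb)) _ measurableSet_Ioi
  intro u hu
  simp only [Pi.add_apply]
  ring

lemma arctan_deriv {b : ℝ} (hb : 0 < b) (u : ℝ) :
    HasDerivAt (fun x : ℝ => Real.arctan (x / Real.sqrt b)) (Real.sqrt b/(u^2+b)) u := by
  have hs : (0:ℝ) < Real.sqrt b := Real.sqrt_pos.2 hb
  have h1 : HasDerivAt (fun x : ℝ => x / Real.sqrt b) (1 / Real.sqrt b) u := by
    simpa using (hasDerivAt_id u).div_const (Real.sqrt b)
  have h2 := (Real.hasDerivAt_arctan (u / Real.sqrt b)).comp u h1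
  refine h2.congr_deriv (Eq.symm ?_)
  have hsq : Real.sqrt b ^ 2 = b := Real.sq_sqrt hb.le
  rw [div_pow]
  rw [hsq]
  field_simp
  ring_nf
  nlinarith [hsq, Real.sqrt_nonneg b]

lemma arctan_tendsto {b : ℝ} (hb : 0 < b) :
    Tendsto (fun x : ℝ => Real.arctan (x / Real.sqrt b)) atTop (nhds (π/2)) :=
  (Real.tendsto_arctan_atTop.mono_right nhdsWithin_le_nhds).comp
    (tendsto_id.atTop_div_const (Real.sqrt_pos.2 hb))

lemma arct_int {b : ℝ} (hb : 0 < b) :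
    IntegrableOn (fun u : ℝ => Real.sqrt b/(u^2+b)) (Ioi 1) := by
  apply integrableOn_Ioi_deriv_of_nonneg
    (((Real.continuous_arctan.comp (continuous_id.div_const _)).continuousWithinAt))
    (fun x _ => arctan_deriv hb x) (fun x _ => by positivity) (arctan_tendsto hb)

lemma arct_eval {b : ℝ} (hb : 0 < b) :
    ∫ u in Ioi (1:ℝ), Real.sqrt b/(u^2+b)
      = π/2 - Real.arctan ((Real.sqrt b)⁻¹) := by
  rw [integral_Ioi_of_hasDerivAt_of_tendsto
    (((Real.continuous_arctan.comp (continuous_id.div_const _)).continuousWithinAt))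
    (fun x _ => arctan_deriv hb x) (arct_int hb) (arctan_tendsto hb)]
  simp [one_div]

lemma sqrt_tendsto_atTop : Tendsto Real.sqrt atTop atTop := by
  apply (tendsto_rpow_atTop (y := 1/2) (by norm_num)).congr'
  filter_upwards [eventually_ge_atTop (0:ℝ)] with x hx
  rw [Real.sqrt_eq_rpow]

lemma inv_sqrt_tendsto : Tendsto (fun b : ℝ => (Real.sqrt b)⁻¹) atTop (nhds 0) :=
  tendsto_inv_atTop_zero.comp sqrt_tendsto_atTop

lemma sqrt_add_le' {x y : ℝ} (hx : 0 ≤ x) (hy : 0 ≤ y) :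
    Real.sqrt (x + y) ≤ Real.sqrt x + Real.sqrt y := by
  rw [show Real.sqrt x + Real.sqrt y = Real.sqrt ((Real.sqrt x + Real.sqrt y)^2) by
    rw [Real.sqrt_sq (by positivity)]]
  apply Real.sqrt_le_sqrt
  nlinarith [Real.sq_sqrt hx, Real.sq_sqrt hy, Real.sqrt_nonneg x, Real.sqrt_nonneg y,
    mul_nonneg (Real.sqrt_nonneg x) (Real.sqrt_nonneg y)]

-- pointwise limit of f_b: f_b u ≤ √2/√b eventually
lemma fb_ptwise {u : ℝ} (hu : 1 < u) :
    Tendsto (fun b : ℝ => Real.sqrt (u+b)/(u^2+b)) atTop (nhds 0) := by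
  apply squeeze_zero' (g := fun b => Real.sqrt 2 * (Real.sqrt b)⁻¹)
  · filter_upwards [eventually_ge_atTop (0:ℝ)] with b hb
    positivity
  · filter_upwards [eventually_ge_atTop (max 1 u)] with b hb
    have hb1 : (1:ℝ) ≤ b := le_trans (le_max_left _ _) hb
    have hbu : u ≤ b := le_trans (le_max_right _ _) hb
    have hb0 : (0:ℝ) < b := by linarith
    have hs : (0:ℝ) < Real.sqrt b := Real.sqrt_pos.2 hb0
    have h1 : Real.sqrt (u+b) ≤ Real.sqrt 2 * Real.sqrt b := by
      rw [← Real.sqrt_mul (by norm_num : (0:ℝ) ≤ 2)]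
      exact Real.sqrt_le_sqrt (by linarith)
    calc Real.sqrt (u+b)/(u^2+b) ≤ (Real.sqrt 2 * Real.sqrt b)/b := by
          apply div_le_div₀ (by positivity) h1 hb0 (by nlinarith)
      _ = Real.sqrt 2 * (Real.sqrt b / b) := by ring
      _ = Real.sqrt 2 * (Real.sqrt b)⁻¹ := by rw [Real.sqrt_div_self]
  · simpa using inv_sqrt_tendsto.const_mul (Real.sqrt 2)

lemma tendsto_D : Tendsto (fun b : ℝ => ∫ u in Ioi (1:ℝ),
    (Real.sqrt u / Real.sqrt (u-1) - 1) * (Real.sqrt (u+b)/(u^2+b))) atTop (nhds 0) := by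
  have h := tendsto_integral_filter_of_dominated_convergence
    (μ := volume.restrict (Ioi (1:ℝ))) (l := (atTop : Filter ℝ))
    (F := fun (b : ℝ) (u : ℝ) =>
      (Real.sqrt u / Real.sqrt (u-1) - 1) * (Real.sqrt (u+b)/(u^2+b)))
    (f := fun _ => (0:ℝ)) (bound := fun u => (Real.sqrt (u-1))⁻¹ * u⁻¹)
    (Eventually.of_forall fun b => (by fun_prop : Measurable fun u : ℝ =>
      (Real.sqrt u / Real.sqrt (u-1) - 1) * (Real.sqrt (u+b)/(u^2+b))).aestronglyMeasurable)
    ?_ g_int ?_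
  · simpa using h
  · filter_upwards [eventually_ge_atTop (0:ℝ)] with b hb
    rw [ae_restrict_iff' measurableSet_Ioi]
    refine ae_of_all _ fun u hu => ?_
    have hu1 : (1:ℝ) < u := hu
    have hu0 : (0:ℝ) < u := by linarith
    have hden : (0:ℝ) < u^2 + b := by positivity
    rw [Real.norm_eq_abs, abs_of_nonneg (mul_nonneg (h_nonneg hu1) (by positivity))]
    exact mul_le_mul (h_le hu1) (fb_le_invu hb hu1.le) (by positivity) (by positivity)
  · rw [ae_restrict_iff' measurableSet_Ioi]
    refine ae_of_all _ fun u hu => ?_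
    simpa using (fb_ptwise hu).const_mul (Real.sqrt u / Real.sqrt (u-1) - 1)

lemma tendsto_J : Tendsto (fun b : ℝ => ∫ u in Ioi (1:ℝ),
    (Real.sqrt (u+b) - Real.sqrt b)/(u^2+b)) atTop (nhds 0) := by
  have h := tendsto_integral_filter_of_dominated_convergence
    (μ := volume.restrict (Ioi (1:ℝ))) (l := (atTop : Filter ℝ))
    (F := fun (b : ℝ) (u : ℝ) => (Real.sqrt (u+b) - Real.sqrt b)/(u^2+b))
    (f := fun _ => (0:ℝ)) (bound := fun u => Real.sqrt u / u^2)
    (Eventually.of_forall fun b => (by fun_prop : Measurable fun u : ℝ =>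
      (Real.sqrt (u+b) - Real.sqrt b)/(u^2+b)).aestronglyMeasurable)
    ?_ base_int ?_
  · simpa using h
  · filter_upwards [eventually_ge_atTop (0:ℝ)] with b hb
    rw [ae_restrict_iff' measurableSet_Ioi]
    refine ae_of_all _ fun u hu => ?_
    have hu1 : (1:ℝ) < u := hu
    have hu0 : (0:ℝ) < u := by linarith
    have hden : (0:ℝ) < u^2 + b := by positivity
    have hnum0 : 0 ≤ Real.sqrt (u+b) - Real.sqrt b :=
      sub_nonneg.2 (Real.sqrt_le_sqrt (by linarith))
    have hnum : Real.sqrt (u+b) - Real.sqrt b ≤ Real.sqrt u := by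
      have := sqrt_add_le' hu0.le hb
      have hc : Real.sqrt (u + b) = Real.sqrt (b + u) := by rw [add_comm]
      linarith [sqrt_add_le' hb hu0.le, hc ▸ le_refl (Real.sqrt (u+b))]
    rw [Real.norm_eq_abs, abs_of_nonneg (by positivity)]
    exact div_le_div₀ (Real.sqrt_nonneg u) hnum (by positivity) (by nlinarith)
  · rw [ae_restrict_iff' measurableSet_Ioi]
    refine ae_of_all _ fun u hu => ?_
    have hu1 : (1:ℝ) < u := hu
    have hu0 : (0:ℝ) < u := by linarith
    apply squeeze_zero' (g := fun b => Real.sqrt u * b⁻¹)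
    · filter_upwards [eventually_ge_atTop (0:ℝ)] with b hb
      have hden : (0:ℝ) < u^2 + b := by positivity
      have hnum0 : 0 ≤ Real.sqrt (u+b) - Real.sqrt b :=
        sub_nonneg.2 (Real.sqrt_le_sqrt (by linarith))
      positivity
    · filter_upwards [eventually_gt_atTop (0:ℝ)] with b hb
      have hden : (0:ℝ) < u^2 + b := by positivity
      have hnum : Real.sqrt (u+b) - Real.sqrt b ≤ Real.sqrt u := by
        have hc : Real.sqrt (u + b) = Real.sqrt (b + u) := by rw [add_comm]
        linarith [sqrt_add_le' hb.le hu0.le, hc ▸ le_refl (Real.sqrt (u+b))]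
      have hnum0 : 0 ≤ Real.sqrt (u+b) - Real.sqrt b :=
        sub_nonneg.2 (Real.sqrt_le_sqrt (by linarith))
      calc (Real.sqrt (u+b) - Real.sqrt b)/(u^2+b) ≤ Real.sqrt u / b :=
            div_le_div₀ (Real.sqrt_nonneg u) hnum hb (by nlinarith)
        _ = Real.sqrt u * b⁻¹ := by rw [div_eq_mul_inv]
    · simpa using tendsto_inv_atTop_zero.const_mul (Real.sqrt u)

lemma I_split {b : ℝ} (hb : 1 ≤ b) :
    ∫ u in Ioi (1:ℝ), Real.sqrt (u+b)/(u^2+b)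
      = (π/2 - Real.arctan ((Real.sqrt b)⁻¹))
        + ∫ u in Ioi (1:ℝ), (Real.sqrt (u+b) - Real.sqrt b)/(u^2+b) := by
  have hb0 : (0:ℝ) < b := by linarith
  have hJint : IntegrableOn (fun u : ℝ => (Real.sqrt (u+b) - Real.sqrt b)/(u^2+b)) (Ioi 1) := by
    apply IntegrableOn.congr_fun ((fb_int hb0.le).sub (arct_int hb0)) _ measurableSet_Ioi
    intro u hu
    simp only [Pi.sub_apply]
    ring
  calc ∫ u in Ioi (1:ℝ), Real.sqrt (u+b)/(u^2+b)
      = ∫ u in Ioi (1:ℝ),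
          (Real.sqrt b/(u^2+b) + (Real.sqrt (u+b) - Real.sqrt b)/(u^2+b)) := by
        apply setIntegral_congr_fun measurableSet_Ioi
        intro u hu
        ring
    _ = (∫ u in Ioi (1:ℝ), Real.sqrt b/(u^2+b))
        + ∫ u in Ioi (1:ℝ), (Real.sqrt (u+b) - Real.sqrt b)/(u^2+b) :=
        integral_add (arct_int hb0) hJint
    _ = _ := by rw [arct_eval hb0]

lemma tendsto_I : Tendsto (fun b : ℝ => ∫ u in Ioi (1:ℝ),
    Real.sqrt (u+b)/(u^2+b)) atTop (nhds (π/2)) := by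
  have h2 : Tendsto (fun b : ℝ => (π/2 - Real.arctan ((Real.sqrt b)⁻¹))
      + ∫ u in Ioi (1:ℝ), (Real.sqrt (u+b) - Real.sqrt b)/(u^2+b)) atTop (nhds (π/2)) := by
    have := (tendsto_const_nhds (x := π/2) (f := atTop (α := ℝ))).sub
      ((Real.continuous_arctan.tendsto 0).comp inv_sqrt_tendsto)
    simpa using this.add tendsto_J
  apply h2.congr'
  filter_upwards [eventually_ge_atTop (1:ℝ)] with b hb
  exact (I_split hb).symm

theorem stmt_13 :
    Tendsto
      (fun b : ℝ =>
        (∫ u in Ioi (1 : ℝ),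
            (Real.sqrt u / Real.sqrt (u - 1)) * (Real.sqrt (u + b) / (u ^ 2 + b))) -
          ∫ u in Ioi (1 : ℝ), Real.sqrt (u + b) / (u ^ 2 + b))
      atTop (nhds 0) ∧
    Tendsto (fun b : ℝ => ∫ u in Ioi (1 : ℝ), Real.sqrt (u + b) / (u ^ 2 + b))
      atTop (nhds (Real.pi / 2)) ∧
    Tendsto
      (fun b : ℝ => ∫ u in Ioi (1 : ℝ),
        (Real.sqrt u / Real.sqrt (u - 1)) * (Real.sqrt (u + b) / (u ^ 2 + b)))
      atTop (nhds (Real.pi / 2)) := by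
  have hA : Tendsto
      (fun b : ℝ =>
        (∫ u in Ioi (1 : ℝ),
            (Real.sqrt u / Real.sqrt (u - 1)) * (Real.sqrt (u + b) / (u ^ 2 + b))) -
          ∫ u in Ioi (1 : ℝ), Real.sqrt (u + b) / (u ^ 2 + b))
      atTop (nhds 0) := by
    apply tendsto_D.congr'
    filter_upwards [eventually_ge_atTop (1:ℝ)] with b hb
    have hb0 : (0:ℝ) ≤ b := by linarith
    rw [← integral_sub (F1_int hb0) (fb_int hb0)]
    apply setIntegral_congr_fun measurableSet_Ioi
    intro u hu
    ring
  refine ⟨hA, tendsto_I, ?_⟩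
  have := hA.add tendsto_I
  simp only [sub_add_cancel, zero_add] at this
  exact this
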